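/- Monotonicity of smooth conditional max-entropy: for random variables X, Y, Z on finite sets and ε ∈ [0,1), H_max^{ε}(X,Y | Z) ≥ H_max^{ε}(X | Z) ≥ H_max^{ε}(X | Y,Z). -/

import Mathlib

open scoped Classical
open Finset Real

/-- Probability of event `E` under distribution `p` on sample space `Ω`. -/
noncomputable def prE {Ω : Type*} [Fintype Ω] (p : Ω → ℝ) (E : Finset Ω) : ℝ :=
  ∑ ω ∈ E, p ω

/-- Sub-normalized joint mass P(f = a, g = b, Ω-event E); note
`P_Y(b) · P_{XΩ|Y=b}(a) = P(X=a, Y=b, E)` under the paper's conventions. -/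
noncomputable def jointE {Ω A B : Type*} [Fintype Ω] (p : Ω → ℝ) (f : Ω → A) (g : Ω → B)
    (E : Finset Ω) (a : A) (b : B) : ℝ :=
  ∑ ω ∈ E, if f ω = a ∧ g ω = b then p ω else 0

/-- Smooth conditional min-entropy
`H_min^ε(f|g) = max_{Ω : Pr[Ω] ≥ 1-ε} −log₂ ∑_b P_g(b) max_a P_{fΩ|g=b}(a)`. -/
noncomputable def HminSm {Ω A B : Type*} [Fintype Ω] [Fintype A] [Fintype B] [Nonempty A]
    (p : Ω → ℝ) (f : Ω → A) (g : Ω → B) (ε : ℝ) : ℝ :=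
  sSup { r | ∃ E : Finset Ω, 1 - ε ≤ prE p E ∧
    r = -Real.logb 2 (∑ b : B,
      Finset.univ.sup' Finset.univ_nonempty (fun a => jointE p f g E a b)) }

/-- Smooth conditional max-entropy
`H_max^ε(f|g) = min_{Ω : Pr[Ω] ≥ 1-ε} max_b log₂ |supp P_{fΩ|g=b}|`. -/
noncomputable def HmaxSm {Ω A B : Type*} [Fintype Ω] [Fintype A] [Fintype B] [Nonempty B]
    (p : Ω → ℝ) (f : Ω → A) (g : Ω → B) (ε : ℝ) : ℝ :=
  sInf { r | ∃ E : Finset Ω, 1 - ε ≤ prE p E ∧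
    r = Finset.univ.sup' Finset.univ_nonempty (fun b =>
      Real.logb 2 ((Finset.univ.filter (fun a => 0 < jointE p f g E a b)).card)) }

/-- `p` is a probability distribution. -/
def IsDist {Ω : Type*} [Fintype Ω] (p : Ω → ℝ) : Prop :=
  (∀ ω, 0 ≤ p ω) ∧ ∑ ω, p ω = 1

section Aux

lemma logb_cast_mono {m n : ℕ} (h : m ≤ n) : Real.logb 2 m ≤ Real.logb 2 n := by
  rcases Nat.eq_zero_or_pos m with h0 | h0
  · subst h0
    simp only [Nat.cast_zero, Real.logb_zero]
    rcases Nat.eq_zero_or_pos n with h1 | h1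
    · simp [h1]
    · exact Real.logb_nonneg one_lt_two (by exact_mod_cast h1)
  · exact Real.logb_le_logb_of_le one_lt_two (by exact_mod_cast h0) (by exact_mod_cast h)

lemma logb_cast_nonneg (n : ℕ) : 0 ≤ Real.logb 2 (n : ℝ) := by
  simpa using logb_cast_mono (Nat.zero_le n)

lemma jointE_nonneg {Ω A B : Type*} [Fintype Ω] {p : Ω → ℝ} (hp0 : ∀ ω, 0 ≤ p ω)
    (f : Ω → A) (g : Ω → B) (E : Finset Ω) (a : A) (b : B) :
    0 ≤ jointE p f g E a b := by
  refine Finset.sum_nonneg fun ω _ => ?_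
  split_ifs with h
  · exact hp0 ω
  · exact le_refl 0

lemma sInf_le_sInf_of_forall {S T : Set ℝ} (hT : T.Nonempty) (hS : BddBelow S)
    (h : ∀ r ∈ T, ∃ r' ∈ S, r' ≤ r) : sInf S ≤ sInf T :=
  le_csInf hT fun r hr => by
    obtain ⟨r', hr', hle⟩ := h r hr
    exact (csInf_le hS hr').trans hle

lemma jointE_fst {Ω X Y Z : Type*} [Fintype Ω] [Fintype Y]
    (p : Ω → ℝ) (fX : Ω → X) (fY : Ω → Y) (fZ : Ω → Z) (E : Finset Ω) (a : X) (b : Z) :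
    jointE p fX fZ E a b = ∑ y : Y, jointE p (fun ω => (fX ω, fY ω)) fZ E (a, y) b := by
  unfold jointE
  rw [Finset.sum_comm]
  refine Finset.sum_congr rfl fun ω _ => ?_
  by_cases h1 : fX ω = a <;> by_cases h2 : fZ ω = b <;>
    simp [h1, h2, Prod.ext_iff, Finset.sum_ite_eq]

/-- The set defining `HmaxSm` is bounded below by `0`. -/
lemma HmaxSm_set_bddBelow {Ω A B : Type*} [Fintype Ω] [Fintype A] [Fintype B] [Nonempty B]
    (p : Ω → ℝ) (f : Ω → A) (g : Ω → B) (ε : ℝ) :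
    BddBelow { r | ∃ E : Finset Ω, 1 - ε ≤ prE p E ∧
      r = Finset.univ.sup' Finset.univ_nonempty (fun b =>
        Real.logb 2 ((Finset.univ.filter (fun a => 0 < jointE p f g E a b)).card)) } := by
  refine ⟨0, fun r hr => ?_⟩
  obtain ⟨E, -, rfl⟩ := hr
  exact Finset.le_sup'_of_le _ (Finset.mem_univ (Classical.arbitrary B)) (logb_cast_nonneg _)

/-- The set defining `HmaxSm` is nonempty when `ε ≥ 0` and `p` is a distribution. -/
lemma HmaxSm_set_nonempty {Ω A B : Type*} [Fintype Ω] [Fintype A] [Fintype B] [Nonempty B]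
    (p : Ω → ℝ) (hp : IsDist p) (f : Ω → A) (g : Ω → B) (ε : ℝ) (hε0 : 0 ≤ ε) :
    { r | ∃ E : Finset Ω, 1 - ε ≤ prE p E ∧
      r = Finset.univ.sup' Finset.univ_nonempty (fun b =>
        Real.logb 2 ((Finset.univ.filter (fun a => 0 < jointE p f g E a b)).card)) }.Nonempty := by
  refine ⟨_, Finset.univ, ?_, rfl⟩
  have : prE p Finset.univ = 1 := hp.2
  rw [this]; linarith

end Aux

/-- Monotonicity of smooth conditional max-entropy:
`H_max^ε(X,Y | Z) ≥ H_max^ε(X | Z) ≥ H_max^ε(X | Y,Z)`. -/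
theorem statement11 {Ω X Y Z : Type*} [Fintype Ω]
    [Fintype X] [Fintype Y] [Fintype Z] [Nonempty X] [Nonempty Y] [Nonempty Z]
    (p : Ω → ℝ) (hp : IsDist p)
    (fX : Ω → X) (fY : Ω → Y) (fZ : Ω → Z)
    (ε : ℝ) (hε0 : 0 ≤ ε) (hε1 : ε < 1) :
    HmaxSm p (fun ω => (fX ω, fY ω)) fZ ε ≥ HmaxSm p fX fZ ε ∧
      HmaxSm p fX fZ ε ≥ HmaxSm p fX (fun ω => (fY ω, fZ ω)) ε := by
  have hp0 := hp.1
  constructor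
  · -- H_max(X|Z) ≤ H_max(XY|Z)
    refine sInf_le_sInf_of_forall
      (HmaxSm_set_nonempty p hp _ fZ ε hε0)
      (HmaxSm_set_bddBelow p fX fZ ε) ?_
    rintro r ⟨E, hE, rfl⟩
    refine ⟨_, ⟨E, hE, rfl⟩, ?_⟩
    refine Finset.sup'_le _ _ fun b _ => ?_
    refine le_trans ?_ (Finset.le_sup' _ (Finset.mem_univ b))
    refine logb_cast_mono ?_
    -- card of supp of X is ≤ card of supp of (X,Y)
    set yOf : X → Y := fun a =>
      if h : ∃ y, 0 < jointE p (fun ω => (fX ω, fY ω)) fZ E (a, y) b then h.choose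
      else Classical.arbitrary Y with hyOf
    refine Finset.card_le_card_of_injOn (fun a => (a, yOf a)) ?_ ?_
    · intro a ha
      simp only [Finset.mem_coe, Finset.mem_filter, Finset.mem_univ, true_and] at ha ⊢
      have hex : ∃ y, 0 < jointE p (fun ω => (fX ω, fY ω)) fZ E (a, y) b := by
        by_contra hcon
        push_neg at hcon
        have hle : (∑ y : Y, jointE p (fun ω => (fX ω, fY ω)) fZ E (a, y) b) ≤ 0 :=
          Finset.sum_nonpos fun y _ => hcon y
        rw [← jointE_fst p fX fY fZ E a b] at hle
        linarith
      have : yOf a = hex.choose := by simp [hyOf, dif_pos hex]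
      rw [this]
      exact hex.choose_spec
    · intro a _ a' _ h
      exact (Prod.mk.injEq _ _ _ _).mp h |>.1
  · -- H_max(X|YZ) ≤ H_max(X|Z)
    refine sInf_le_sInf_of_forall
      (HmaxSm_set_nonempty p hp fX fZ ε hε0)
      (HmaxSm_set_bddBelow p fX (fun ω => (fY ω, fZ ω)) ε) ?_
    rintro r ⟨E, hE, rfl⟩
    refine ⟨_, ⟨E, hE, rfl⟩, ?_⟩
    refine Finset.sup'_le _ _ fun yz _ => ?_
    refine le_trans ?_ (Finset.le_sup' _ (Finset.mem_univ yz.2))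
    refine logb_cast_mono (Finset.card_le_card ?_)
    intro a ha
    simp only [Finset.mem_filter, Finset.mem_univ, true_and] at ha ⊢
    refine lt_of_lt_of_le ha ?_
    refine Finset.sum_le_sum fun ω _ => ?_
    by_cases h1 : fX ω = a ∧ (fY ω, fZ ω) = yz
    · rw [if_pos h1, if_pos ⟨h1.1, by rw [← h1.2]⟩]
    · rw [if_neg h1]
      split_ifs with h2
      · exact hp0 ω
      · exact le_refl 0
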